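/- (Equation (6) in the proof of Lemma 3.1: closed-form n-th root) Under the Haar-type hypotheses, let m ≥ 1 be an integer and let ρ̂ ∈ H⁺₀, so that all diagonal entries of D(ρ̂) are nonnegative. Define û := H · D(ρ̂)^{1/m} · Hᵀ e₀, where D(ρ̂)^{1/m} is the diagonal matrix whose entries are the (real, nonnegative) m-th roots of the diagonal entries of D(ρ̂). Then û ∈ H⁺₀ and (P(û))^m e₀ = ρ̂; that is, û is the preimage of ρ̂ under the map T_m(û) = (P(û))^m e₀. -/

import Mathlib

open Matrix

/-- Equation (6) in the proof of Lemma 3.1 (closed-form `m`-th root): under the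
Haar-type hypotheses, if `ρ ∈ H⁺₀` then `uh := H · D(ρ)^{1/m} · Hᵀ e₀`, formed with
the entrywise nonnegative `m`-th roots of the diagonal of `D(ρ) := Hᵀ P(ρ) H`,
satisfies `uh ∈ H⁺₀` and `(P uh)^m e₀ = ρ`. -/
theorem haar_sg_closed_form_root {n : ℕ} [NeZero n]
    (M : Fin n → Matrix (Fin n) (Fin n) ℝ)
    (hMsymm : ∀ k, (M k).IsSymm) (hM0 : M 0 = 1)
    (P : (Fin n → ℝ) → Matrix (Fin n) (Fin n) ℝ)
    (hP : ∀ uh, P uh = ∑ k, uh k • M k)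
    (hsym : ∀ uh wh : Fin n → ℝ, (P uh).mulVec wh = (P wh).mulVec uh)
    (e0 : Fin n → ℝ) (he0 : e0 = Pi.single 0 1)
    (H : Matrix (Fin n) (Fin n) ℝ) (hH : Hᵀ * H = 1)
    (hdiag : ∀ k, (Hᵀ * M k * H).IsDiag)
    (m : ℕ) (hm : 1 ≤ m)
    (ρ : Fin n → ℝ) (hρ : (P ρ).PosSemidef)
    (uh : Fin n → ℝ)
    (huh : uh = (H * Matrix.diagonal
        (fun i => ((Hᵀ * P ρ * H) i i) ^ ((m : ℝ)⁻¹)) * Hᵀ).mulVec e0) :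
    (P uh).PosSemidef ∧ (P uh ^ m).mulVec e0 = ρ := by
  have hHHt : H * Hᵀ = 1 := mul_eq_one_comm.mp hH
  have hHconj : Hᴴ = Hᵀ := by ext i j; simp [Matrix.conjTranspose_apply]
  -- P e0 = 1
  have hPe0 : P e0 = 1 := by
    rw [hP, he0]
    rw [Finset.sum_eq_single (0 : Fin n)]
    · simp [hM0]
    · intro k _ hk; simp [Pi.single_apply, hk]
    · simp
  have hPmul : ∀ w : Fin n → ℝ, (P w).mulVec e0 = w := by
    intro w
    rw [hsym w e0, hPe0, Matrix.one_mulVec]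
  -- linearity of P
  have hPadd : ∀ u v : Fin n → ℝ, P (u + v) = P u + P v := by
    intro u v; simp [hP, add_smul, Finset.sum_add_distrib]
  have hPsmul : ∀ (c : ℝ) (u : Fin n → ℝ), P (c • u) = c • P u := by
    intro c u; simp [hP, Finset.smul_sum, smul_smul]
  -- D(u) is diagonal
  have hsumD : ∀ u : Fin n → ℝ, Hᵀ * P u * H = ∑ k, u k • (Hᵀ * M k * H) := by
    intro u
    simp [hP, Finset.mul_sum, Finset.sum_mul, Matrix.mul_smul, Matrix.smul_mul]
  have hDdiag : ∀ u : Fin n → ℝ, (Hᵀ * P u * H).IsDiag := by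
    intro u i j hij
    rw [hsumD]
    simp only [Matrix.sum_apply, Matrix.smul_apply, smul_eq_mul]
    refine Finset.sum_eq_zero fun k _ => ?_
    rw [hdiag k hij, mul_zero]
  -- reconstruction from the conjugated matrix
  have hrec : ∀ A : Matrix (Fin n) (Fin n) ℝ, H * (Hᵀ * A * H) * Hᵀ = A := by
    intro A
    calc H * (Hᵀ * A * H) * Hᵀ = (H * Hᵀ) * A * (H * Hᵀ) := by
          simp only [Matrix.mul_assoc]
      _ = A := by rw [hHHt]; simp
  -- the linear map u ↦ diag of D(u) is bijective
  let L : (Fin n → ℝ) →ₗ[ℝ] (Fin n → ℝ) :=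
    { toFun := fun u => fun i => (Hᵀ * P u * H) i i
      map_add' := by intro u v; funext i; simp [hPadd, Matrix.add_mul, Matrix.mul_add]
      map_smul' := by intro c u; funext i; simp [hPsmul, Matrix.mul_smul, Matrix.smul_mul] }
  have hDinj : ∀ u : Fin n → ℝ, (∀ i, (Hᵀ * P u * H) i i = 0) → u = 0 := by
    intro u hu
    have hD0 : Hᵀ * P u * H = 0 := by
      ext i j
      by_cases hij : i = j
      · subst hij; simpa using hu i
      · simpa using hDdiag u hij
    have : P u = 0 := by
      have := hrec (P u)
      rw [hD0] at this
      simpa using this.symm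
    have := hPmul u
    rw [this] at this ⊢
    simpa [Matrix.zero_mulVec] using (hPmul u).symm.trans (by rw [‹P u = 0›]; simp)
  have hLinj : Function.Injective L := by
    rw [← LinearMap.ker_eq_bot, LinearMap.ker_eq_bot']
    intro u hu
    exact hDinj u fun i => congrFun hu i
  have hLsurj : Function.Surjective L :=
    (LinearMap.injective_iff_surjective).mp hLinj
  -- target diagonal entries
  set d : Fin n → ℝ := fun i => (Hᵀ * P ρ * H) i i with hd
  set f : Fin n → ℝ := fun i => d i ^ ((m : ℝ)⁻¹) with hf
  obtain ⟨u, hu⟩ := hLsurj f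
  have hDu : Hᵀ * P u * H = Matrix.diagonal f := by
    ext i j
    by_cases hij : i = j
    · subst hij
      rw [Matrix.diagonal_apply_eq]; exact congrFun hu i
    · rw [Matrix.diagonal_apply_ne _ hij]
      simpa using hDdiag u hij
  have hPu : P u = H * Matrix.diagonal f * Hᵀ := by
    conv_lhs => rw [← hrec (P u), hDu]
  -- uh = u
  have huhu : uh = u := by
    rw [huh, ← hPu, hPmul]
  -- nonnegativity of d
  have hDρps : (Hᵀ * P ρ * H).PosSemidef := by
    have := hρ.conjTranspose_mul_mul_same H
    rwa [hHconj] at this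
  have hdnn : ∀ i, 0 ≤ d i := by
    intro i
    have h2 := hDρps.dotProduct_mulVec_nonneg (Pi.single i 1)
    simpa [Matrix.mulVec, dotProduct, Pi.single_apply, Finset.sum_ite_eq,
      mul_comm] using h2
  have hfnn : ∀ i, 0 ≤ f i := fun i => Real.rpow_nonneg (hdnn i) _
  -- positive semidefiniteness of P uh
  have hps : (P uh).PosSemidef := by
    rw [huhu, hPu, ← hHconj]
    exact (Matrix.posSemidef_diagonal_iff.mpr hfnn).mul_mul_conjTranspose_same H
  refine ⟨hps, ?_⟩
  -- power formula
  have hpow : ∀ j : ℕ, (H * Matrix.diagonal f * Hᵀ) ^ j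
      = H * Matrix.diagonal (fun i => f i ^ j) * Hᵀ := by
    intro j
    induction j with
    | zero => simp [hHHt]
    | succ j ih =>
      rw [pow_succ, ih]
      calc H * Matrix.diagonal (fun i => f i ^ j) * Hᵀ * (H * Matrix.diagonal f * Hᵀ)
          = H * (Matrix.diagonal (fun i => f i ^ j) * (Hᵀ * H) * Matrix.diagonal f) * Hᵀ := by
            simp only [Matrix.mul_assoc]
        _ = H * Matrix.diagonal (fun i => f i ^ (j + 1)) * Hᵀ := by
            rw [hH, Matrix.mul_one, Matrix.diagonal_mul_diagonal]
            simp [pow_succ, Matrix.mul_assoc]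
  have hfm : (fun i => f i ^ m) = d := by
    funext i
    simp only [hf]
    exact Real.rpow_inv_natCast_pow (hdnn i) (by omega)
  have hdiagd : Matrix.diagonal d = Hᵀ * P ρ * H := by
    ext i j
    by_cases hij : i = j
    · subst hij; simp [hd]
    · rw [Matrix.diagonal_apply_ne _ hij]
      exact (hDdiag ρ hij).symm
  have : P uh ^ m = P ρ := by
    rw [huhu, hPu, hpow, hfm, hdiagd, hrec]
  rw [this, hPmul]
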